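/- arXiv:2006.00668 — 2 statements merged into one kernel-verified Lean document; each statement's English description precedes it below -/
import Mathlib

section
/- The function f(X) = 1 - (sin(2πX)/(2πX))² + (1/(2π)) · d/dX(sin(2πX)/(2πX)) · ∫₀^{2πX} (sin t)/t dt satisfies the fifth-order linear ODE X⁵f⁽⁵⁾ + 10X⁴f⁽⁴⁾ + (20π²X⁵ + 12X³)f⁽³⁾ + (64π²X⁴ - 40X²)f⁽²⁾ + (64π⁴X⁵ - 48π²X³ - 16X)f' + (-32π²X² + 16)f = 0. -/
open Real intervalIntegral

/-- Bulk two-point correlation of the circular β = 4 ensemble. -/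
noncomputable def f4 (X : ℝ) : ℝ :=
  1 - (Real.sin (2 * Real.pi * X) / (2 * Real.pi * X)) ^ 2 +
    (1 / (2 * Real.pi)) * deriv (fun Y => Real.sin (2 * Real.pi * Y) / (2 * Real.pi * Y)) X *
      ∫ t in (0 : ℝ)..(2 * Real.pi * X), Real.sin t / t

namespace CB4

noncomputable def tp : ℝ := 2 * Real.pi

lemma tp_pos : 0 < tp := by
  have := Real.pi_pos; unfold tp; linarith

lemma tp_ne_zero : tp ≠ 0 := tp_pos.ne'

noncomputable def S (y : ℝ) : ℝ := Real.sin (tp * y)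
noncomputable def C (y : ℝ) : ℝ := Real.cos (tp * y)
noncomputable def I (y : ℝ) : ℝ := ∫ t in (0 : ℝ)..(tp * y), Real.sin t / t

lemma hasDerivAt_S (Y : ℝ) : HasDerivAt S (tp * C Y) Y := by
  have h := (Real.hasDerivAt_sin (tp * Y)).comp Y ((hasDerivAt_id Y).const_mul tp)
  exact h.congr_deriv (by unfold C; ring)

lemma hasDerivAt_C (Y : ℝ) : HasDerivAt C (-(tp * S Y)) Y := by
  have h := (Real.hasDerivAt_cos (tp * Y)).comp Y ((hasDerivAt_id Y).const_mul tp)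
  exact h.congr_deriv (by unfold S; ring)

lemma sinc_integrable (b : ℝ) :
    IntervalIntegrable (fun t => Real.sin t / t) MeasureTheory.volume 0 b := by
  rw [intervalIntegrable_iff]
  apply MeasureTheory.Integrable.mono'
    (g := fun _ : ℝ => (1 : ℝ))
  · exact MeasureTheory.integrableOn_const measure_Ioc_lt_top.ne
  · exact ((Real.measurable_sin.div measurable_id)).aestronglyMeasurable
  · filter_upwards with t
    rcases eq_or_ne t 0 with rfl | ht
    · simp
    · rw [Real.norm_eq_abs, abs_div]
      rw [div_le_one (abs_pos.2 ht)]
      exact Real.abs_sin_le_abs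

lemma hasDerivAt_I {Y : ℝ} (hY : 0 < Y) : HasDerivAt I (S Y * Y⁻¹) Y := by
  have hb : 0 < tp * Y := mul_pos tp_pos hY
  have hint := sinc_integrable (tp * Y)
  have hmeas : StronglyMeasurableAtFilter (fun t => Real.sin t / t) (nhds (tp * Y)) :=
    ((Real.measurable_sin.div measurable_id).stronglyMeasurable).stronglyMeasurableAtFilter
  have hcont : ContinuousAt (fun t => Real.sin t / t) (tp * Y) :=
    (Real.continuous_sin.continuousAt).div continuousAt_id hb.ne'
  have h1 : HasDerivAt (fun u => ∫ t in (0:ℝ)..u, Real.sin t / t)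
      (Real.sin (tp * Y) / (tp * Y)) (tp * Y) :=
    intervalIntegral.integral_hasDerivAt_right hint hmeas hcont
  have h2 := h1.comp Y ((hasDerivAt_id Y).const_mul tp)
  have h3 : HasDerivAt I (Real.sin (tp * Y) / (tp * Y) * (tp * 1)) Y := h2
  refine h3.congr_deriv ?_
  have htp := tp_ne_zero
  have hY' := hY.ne'
  field_simp [S]
  rfl

lemma hasDerivAt_mon (c : ℝ) (k : ℕ) {Y : ℝ} (hY : Y ≠ 0) :
    HasDerivAt (fun y : ℝ => c * (y⁻¹) ^ k) (-(c * k) * (Y⁻¹) ^ (k + 1)) Y := by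
  have h := ((hasDerivAt_inv hY).pow k).const_mul c
  refine h.congr_deriv ?_
  cases k with
  | zero => simp
  | succ n =>
    have h2 : ((Y : ℝ) ^ 2)⁻¹ = (Y⁻¹) ^ 2 := by rw [inv_pow]
    simp only [Nat.add_sub_cancel, h2]
    push_cast
    ring

lemma key {Y : ℝ} (hY : 0 < Y) {p0 p1 p2 p3 q1 q2 : ℝ → ℝ} {d0 d1 d2 d3 e1 e2 : ℝ}
    (h0 : HasDerivAt p0 d0 Y) (h1 : HasDerivAt p1 d1 Y) (h2 : HasDerivAt p2 d2 Y)
    (h3 : HasDerivAt p3 d3 Y) (h4 : HasDerivAt q1 e1 Y) (h5 : HasDerivAt q2 e2 Y) :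
    HasDerivAt (fun y => p0 y + p1 y * S y ^ 2 + p2 y * (S y * C y) + p3 y * C y ^ 2
        + (q1 y * S y + q2 y * C y) * I y)
      (d0 + (d1 - tp * p2 Y + q1 Y * Y⁻¹) * S Y ^ 2
        + (d2 + 2 * tp * p1 Y - 2 * tp * p3 Y + q2 Y * Y⁻¹) * (S Y * C Y)
        + (d3 + tp * p2 Y) * C Y ^ 2
        + ((e1 - tp * q2 Y) * S Y + (e2 + tp * q1 Y) * C Y) * I Y) Y := by
  have hS := hasDerivAt_S Y
  have hC := hasDerivAt_C Y
  have hI := hasDerivAt_I hY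
  have H := (((h0.add (h1.mul (hS.pow 2))).add (h2.mul (hS.mul hC))).add
      (h3.mul (hC.pow 2))).add (((h4.mul hS).add (h5.mul hC)).mul hI)
  refine H.congr_deriv ?_
  simp only [Pi.pow_apply, Pi.mul_apply, Pi.add_apply]
  push_cast
  ring

noncomputable def F0 : ℝ → ℝ := fun y => (1 : ℝ) * (y⁻¹) ^ 0 + (-1 / tp ^ 2) * (y⁻¹) ^ 2 * S y ^ 2 + (0 : ℝ) * (S y * C y) + (0 : ℝ) * C y ^ 2 + ((-1 / tp ^ 2) * (y⁻¹) ^ 2 * S y + (1 / tp) * (y⁻¹) ^ 1 * C y) * I y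

noncomputable def F1 : ℝ → ℝ := fun y => (0 : ℝ) + (1 / tp ^ 2) * (y⁻¹) ^ 3 * S y ^ 2 + (-1 / tp) * (y⁻¹) ^ 2 * (S y * C y) + (0 : ℝ) * C y ^ 2 + (((2 / tp ^ 2) * (y⁻¹) ^ 3 + (-1 : ℝ) * (y⁻¹) ^ 1) * S y + (-2 / tp) * (y⁻¹) ^ 2 * C y) * I y

noncomputable def F2 : ℝ → ℝ := fun y => (0 : ℝ) + (-1 / tp ^ 2) * (y⁻¹) ^ 4 * S y ^ 2 + (2 / tp) * (y⁻¹) ^ 3 * (S y * C y) + (-1 : ℝ) * (y⁻¹) ^ 2 * C y ^ 2 + (((-6 / tp ^ 2) * (y⁻¹) ^ 4 + (3 : ℝ) * (y⁻¹) ^ 2) * S y + ((6 / tp) * (y⁻¹) ^ 3 + (-1 * tp) * (y⁻¹) ^ 1) * C y) * I y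

noncomputable def F3 : ℝ → ℝ := fun y => (0 : ℝ) + ((-2 / tp ^ 2) * (y⁻¹) ^ 5 + (1 : ℝ) * (y⁻¹) ^ 3) * S y ^ 2 + ((-2 / tp) * (y⁻¹) ^ 4 + (1 * tp) * (y⁻¹) ^ 2) * (S y * C y) + (4 : ℝ) * (y⁻¹) ^ 3 * C y ^ 2 + (((24 / tp ^ 2) * (y⁻¹) ^ 5 + (-12 : ℝ) * (y⁻¹) ^ 3 + (1 * tp ^ 2) * (y⁻¹) ^ 1) * S y + ((-24 / tp) * (y⁻¹) ^ 4 + (4 * tp) * (y⁻¹) ^ 2) * C y) * I y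

noncomputable def F4 : ℝ → ℝ := fun y => (0 : ℝ) + ((34 / tp ^ 2) * (y⁻¹) ^ 6 + (-13 : ℝ) * (y⁻¹) ^ 4) * S y ^ 2 + ((-20 / tp) * (y⁻¹) ^ 5 + (-4 * tp) * (y⁻¹) ^ 3) * (S y * C y) + ((-14 : ℝ) * (y⁻¹) ^ 4 + (1 * tp ^ 2) * (y⁻¹) ^ 2) * C y ^ 2 + (((-120 / tp ^ 2) * (y⁻¹) ^ 6 + (60 : ℝ) * (y⁻¹) ^ 4 + (-5 * tp ^ 2) * (y⁻¹) ^ 2) * S y + ((120 / tp) * (y⁻¹) ^ 5 + (-20 * tp) * (y⁻¹) ^ 3 + (1 * tp ^ 3) * (y⁻¹) ^ 1) * C y) * I y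

noncomputable def F5 : ℝ → ℝ := fun y => (0 : ℝ) + ((-324 / tp ^ 2) * (y⁻¹) ^ 7 + (132 : ℝ) * (y⁻¹) ^ 5 + (-1 * tp ^ 2) * (y⁻¹) ^ 3) * S y ^ 2 + ((288 / tp) * (y⁻¹) ^ 6 + (-6 * tp) * (y⁻¹) ^ 4 + (-1 * tp ^ 3) * (y⁻¹) ^ 2) * (S y * C y) + ((36 : ℝ) * (y⁻¹) ^ 5 + (-6 * tp ^ 2) * (y⁻¹) ^ 3) * C y ^ 2 + (((720 / tp ^ 2) * (y⁻¹) ^ 7 + (-360 : ℝ) * (y⁻¹) ^ 5 + (30 * tp ^ 2) * (y⁻¹) ^ 3 + (-1 * tp ^ 4) * (y⁻¹) ^ 1) * S y + ((-720 / tp) * (y⁻¹) ^ 6 + (120 * tp) * (y⁻¹) ^ 4 + (-6 * tp ^ 3) * (y⁻¹) ^ 2) * C y) * I y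

set_option maxHeartbeats 2000000 in
lemma hF0 {Y : ℝ} (hY : 0 < Y) : HasDerivAt F0 (F1 Y) Y := by
  have hY' : Y ≠ 0 := hY.ne'
  have htp : tp ≠ 0 := tp_ne_zero
  have H := key hY (hasDerivAt_mon (1 : ℝ) 0 hY') (hasDerivAt_mon (-1 / tp ^ 2) 2 hY') (hasDerivAt_const Y (0:ℝ)) (hasDerivAt_const Y (0:ℝ)) (hasDerivAt_mon (-1 / tp ^ 2) 2 hY') (hasDerivAt_mon (1 / tp) 1 hY')
  refine H.congr_deriv ?_
  simp only [F1]
  simp only [Pi.add_apply, inv_pow]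
  field_simp
  ring

set_option maxHeartbeats 2000000 in
lemma hF1 {Y : ℝ} (hY : 0 < Y) : HasDerivAt F1 (F2 Y) Y := by
  have hY' : Y ≠ 0 := hY.ne'
  have htp : tp ≠ 0 := tp_ne_zero
  have H := key hY (hasDerivAt_const Y (0:ℝ)) (hasDerivAt_mon (1 / tp ^ 2) 3 hY') (hasDerivAt_mon (-1 / tp) 2 hY') (hasDerivAt_const Y (0:ℝ)) ((hasDerivAt_mon (2 / tp ^ 2) 3 hY').add (hasDerivAt_mon (-1 : ℝ) 1 hY')) (hasDerivAt_mon (-2 / tp) 2 hY')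
  refine H.congr_deriv ?_
  simp only [F2]
  simp only [Pi.add_apply, inv_pow]
  field_simp
  ring

set_option maxHeartbeats 2000000 in
lemma hF2 {Y : ℝ} (hY : 0 < Y) : HasDerivAt F2 (F3 Y) Y := by
  have hY' : Y ≠ 0 := hY.ne'
  have htp : tp ≠ 0 := tp_ne_zero
  have H := key hY (hasDerivAt_const Y (0:ℝ)) (hasDerivAt_mon (-1 / tp ^ 2) 4 hY') (hasDerivAt_mon (2 / tp) 3 hY') (hasDerivAt_mon (-1 : ℝ) 2 hY') ((hasDerivAt_mon (-6 / tp ^ 2) 4 hY').add (hasDerivAt_mon (3 : ℝ) 2 hY')) ((hasDerivAt_mon (6 / tp) 3 hY').add (hasDerivAt_mon (-1 * tp) 1 hY'))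
  refine H.congr_deriv ?_
  simp only [F3]
  simp only [Pi.add_apply, inv_pow]
  field_simp
  ring

set_option maxHeartbeats 2000000 in
lemma hF3 {Y : ℝ} (hY : 0 < Y) : HasDerivAt F3 (F4 Y) Y := by
  have hY' : Y ≠ 0 := hY.ne'
  have htp : tp ≠ 0 := tp_ne_zero
  have H := key hY (hasDerivAt_const Y (0:ℝ)) ((hasDerivAt_mon (-2 / tp ^ 2) 5 hY').add (hasDerivAt_mon (1 : ℝ) 3 hY')) ((hasDerivAt_mon (-2 / tp) 4 hY').add (hasDerivAt_mon (1 * tp) 2 hY')) (hasDerivAt_mon (4 : ℝ) 3 hY') (((hasDerivAt_mon (24 / tp ^ 2) 5 hY').add (hasDerivAt_mon (-12 : ℝ) 3 hY')).add (hasDerivAt_mon (1 * tp ^ 2) 1 hY')) ((hasDerivAt_mon (-24 / tp) 4 hY').add (hasDerivAt_mon (4 * tp) 2 hY'))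
  refine H.congr_deriv ?_
  simp only [F4]
  simp only [Pi.add_apply, inv_pow]
  field_simp
  ring

set_option maxHeartbeats 2000000 in
lemma hF4 {Y : ℝ} (hY : 0 < Y) : HasDerivAt F4 (F5 Y) Y := by
  have hY' : Y ≠ 0 := hY.ne'
  have htp : tp ≠ 0 := tp_ne_zero
  have H := key hY (hasDerivAt_const Y (0:ℝ)) ((hasDerivAt_mon (34 / tp ^ 2) 6 hY').add (hasDerivAt_mon (-13 : ℝ) 4 hY')) ((hasDerivAt_mon (-20 / tp) 5 hY').add (hasDerivAt_mon (-4 * tp) 3 hY')) ((hasDerivAt_mon (-14 : ℝ) 4 hY').add (hasDerivAt_mon (1 * tp ^ 2) 2 hY')) (((hasDerivAt_mon (-120 / tp ^ 2) 6 hY').add (hasDerivAt_mon (60 : ℝ) 4 hY')).add (hasDerivAt_mon (-5 * tp ^ 2) 2 hY')) (((hasDerivAt_mon (120 / tp) 5 hY').add (hasDerivAt_mon (-20 * tp) 3 hY')).add (hasDerivAt_mon (1 * tp ^ 3) 1 hY'))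
  refine H.congr_deriv ?_
  simp only [F5]
  simp only [Pi.add_apply, inv_pow]
  field_simp
  ring


set_option maxHeartbeats 2000000 in
lemma f4_eq_F0 {Y : ℝ} (hY : 0 < Y) : f4 Y = F0 Y := by
  have hpi : (Real.pi : ℝ) ≠ 0 := Real.pi_ne_zero
  have hY' : Y ≠ 0 := hY.ne'
  have hg : deriv (fun y => Real.sin (2 * Real.pi * y) / (2 * Real.pi * y)) Y
      = Real.cos (2 * Real.pi * Y) / Y - Real.sin (2 * Real.pi * Y) / (2 * Real.pi * Y ^ 2) := by
    have h1 : HasDerivAt (fun y : ℝ => Real.sin (2 * Real.pi * y))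
        (Real.cos (2 * Real.pi * Y) * (2 * Real.pi)) Y := by
      have h := (Real.hasDerivAt_sin (2 * Real.pi * Y)).comp Y
        ((hasDerivAt_id Y).const_mul (2 * Real.pi))
      exact h.congr_deriv (by ring)
    have h2 : HasDerivAt (fun y : ℝ => 2 * Real.pi * y) (2 * Real.pi) Y := by
      simpa using (hasDerivAt_id Y).const_mul (2 * Real.pi)
    have hne : 2 * Real.pi * Y ≠ 0 := by positivity
    have h3 : HasDerivAt (fun y => Real.sin (2 * Real.pi * y) / (2 * Real.pi * y)) _ Y :=
      h1.div h2 hne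
    rw [h3.deriv]
    field_simp
  show _ = F0 Y
  simp only [F0, S, C, I, tp]
  rw [f4, hg]
  field_simp
  ring

lemma deriv_f4_eq {Y : ℝ} (hY : 0 < Y) : deriv f4 Y = F1 Y := by
  have hev : f4 =ᶠ[nhds Y] F0 :=
    Filter.eventuallyEq_of_mem (Ioi_mem_nhds hY) (fun y hy => f4_eq_F0 hy)
  rw [hev.deriv_eq]
  exact (hF0 hY).deriv

lemma id2 {Y : ℝ} (hY : 0 < Y) : iteratedDeriv 2 f4 Y = F2 Y := by
  rw [iteratedDeriv_succ, iteratedDeriv_one]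
  have hev : deriv f4 =ᶠ[nhds Y] F1 :=
    Filter.eventuallyEq_of_mem (Ioi_mem_nhds hY) (fun y hy => deriv_f4_eq hy)
  rw [hev.deriv_eq]
  exact (hF1 hY).deriv

lemma id3 {Y : ℝ} (hY : 0 < Y) : iteratedDeriv 3 f4 Y = F3 Y := by
  rw [iteratedDeriv_succ]
  have hev : iteratedDeriv 2 f4 =ᶠ[nhds Y] F2 :=
    Filter.eventuallyEq_of_mem (Ioi_mem_nhds hY) (fun y hy => id2 hy)
  rw [hev.deriv_eq]
  exact (hF2 hY).deriv

lemma id4 {Y : ℝ} (hY : 0 < Y) : iteratedDeriv 4 f4 Y = F4 Y := by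
  rw [iteratedDeriv_succ]
  have hev : iteratedDeriv 3 f4 =ᶠ[nhds Y] F3 :=
    Filter.eventuallyEq_of_mem (Ioi_mem_nhds hY) (fun y hy => id3 hy)
  rw [hev.deriv_eq]
  exact (hF3 hY).deriv

lemma id5 {Y : ℝ} (hY : 0 < Y) : iteratedDeriv 5 f4 Y = F5 Y := by
  rw [iteratedDeriv_succ]
  have hev : iteratedDeriv 4 f4 =ᶠ[nhds Y] F4 :=
    Filter.eventuallyEq_of_mem (Ioi_mem_nhds hY) (fun y hy => id4 hy)
  rw [hev.deriv_eq]
  exact (hF4 hY).deriv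

end CB4

set_option maxHeartbeats 2000000 in
/-- `f4` satisfies the fifth-order linear ODE. -/
theorem stmt_3 (X : ℝ) (hX : 0 < X) :
    X ^ 5 * iteratedDeriv 5 f4 X + 10 * X ^ 4 * iteratedDeriv 4 f4 X +
      (20 * Real.pi ^ 2 * X ^ 5 + 12 * X ^ 3) * iteratedDeriv 3 f4 X +
      (64 * Real.pi ^ 2 * X ^ 4 - 40 * X ^ 2) * iteratedDeriv 2 f4 X +
      (64 * Real.pi ^ 4 * X ^ 5 - 48 * Real.pi ^ 2 * X ^ 3 - 16 * X) * deriv f4 X +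
      (-32 * Real.pi ^ 2 * X ^ 2 + 16) * f4 X = 0 := by
  have hX' : X ≠ 0 := hX.ne'
  have hpi : (Real.pi : ℝ) ≠ 0 := Real.pi_ne_zero
  have hsc : CB4.S X ^ 2 + CB4.C X ^ 2 = 1 := Real.sin_sq_add_cos_sq _
  rw [CB4.id5 hX, CB4.id4 hX, CB4.id3 hX, CB4.id2 hX, CB4.deriv_f4_eq hX, CB4.f4_eq_F0 hX]
  simp only [CB4.F0, CB4.F1, CB4.F2, CB4.F3, CB4.F4, CB4.F5, CB4.S, CB4.C, CB4.tp]
  have hsc' : Real.sin (2 * Real.pi * X) ^ 2 + Real.cos (2 * Real.pi * X) ^ 2 = 1 := by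
    simpa [CB4.S, CB4.C, CB4.tp] using hsc
  set s := Real.sin (2 * Real.pi * X)
  set c := Real.cos (2 * Real.pi * X)
  set i := CB4.I X
  field_simp
  linear_combination (-64 * X ^ 2 * Real.pi ^ 2 + 128 * X ^ 4 * Real.pi ^ 4) * hsc'
end

section
/- For the Hermite generating function setup, I(p,q,z) := ∫_{-∞}^{∞} e^{xz} H_p(x) H_q(x) e^{-x²} dx equals √π · 2^q · q! · e^{z²/4} · z^{p-q} · L_q^{(p-q)}(-z²/2), where H_p is the (physicists') Hermite polynomial and L_q^{(α)} the generalized Laguerre polynomial, for integers p ≥ q ≥ 0 and real z. -/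
open Real MeasureTheory Finset

/-- Physicists' Hermite polynomials: `H₀ = 1`, `H₁ = 2x`,
`H_{n+2}(x) = 2x H_{n+1}(x) - 2(n+1) H_n(x)`. -/
noncomputable def physHermite : ℕ → ℝ → ℝ
  | 0 => fun _ => 1
  | 1 => fun x => 2 * x
  | (n + 2) => fun x => 2 * x * physHermite (n + 1) x - 2 * (n + 1) * physHermite n x

/-- Generalized Laguerre polynomial `L_n^{(α)}(x) = Σ_{k=0}^n (-1)^k binom(n+α, n-k) x^k/k!`,
with `binom(n+α, n-k) = (Π_{j=k+1}^n (α+j)) / (n-k)!`. -/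
noncomputable def genLaguerre (n : ℕ) (α : ℝ) (x : ℝ) : ℝ :=
  ∑ k ∈ Finset.range (n + 1),
    (-1 : ℝ) ^ k * (∏ j ∈ Finset.Icc (k + 1) n, (α + j)) / (Nat.factorial (n - k)) *
      x ^ k / (Nat.factorial k)

noncomputable def Hpoly : ℕ → Polynomial ℝ
  | 0 => 1
  | 1 => 2 * Polynomial.X
  | (n + 2) => 2 * Polynomial.X * Hpoly (n + 1) - Polynomial.C (2 * (n + 1) : ℝ) * Hpoly n

lemma Hpoly_add_two (n : ℕ) : Hpoly (n + 2)
    = 2 * Polynomial.X * Hpoly (n + 1) - Polynomial.C (2 * ((n : ℝ) + 1)) * Hpoly n := rfl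

lemma physHermite_eq (n : ℕ) (x : ℝ) : physHermite n x = (Hpoly n).eval x := by
  induction n using Nat.strong_induction_on with
  | _ n ih =>
    match n with
    | 0 => simp [physHermite, Hpoly]
    | 1 => simp [physHermite, Hpoly]
    | (n+2) =>
      rw [Hpoly_add_two]
      simp only [physHermite, ih n (by omega), ih (n+1) (by omega),
        Polynomial.eval_sub, Polynomial.eval_mul, Polynomial.eval_C, Polynomial.eval_X,
        Polynomial.eval_ofNat]

lemma deriv_eval_aux (c : ℝ) (P Q : Polynomial ℝ) (x : ℝ) :
    (Polynomial.derivative (2 * Polynomial.X * P - Polynomial.C c * Q)).eval x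
      = 2 * P.eval x + 2 * x * (Polynomial.derivative P).eval x
        - c * (Polynomial.derivative Q).eval x := by
  simp [Polynomial.derivative_mul]

lemma Hpoly_deriv_eval (n : ℕ) (x : ℝ) :
    (Polynomial.derivative (Hpoly (n + 1))).eval x = 2 * (n + 1) * (Hpoly n).eval x := by
  induction n using Nat.strong_induction_on generalizing x with
  | _ n ih =>
    match n with
    | 0 =>
      show (Polynomial.derivative (2 * Polynomial.X)).eval x = _
      simp [Hpoly]
    | 1 =>
      rw [show (1:ℕ) + 1 = 0 + 2 from rfl, Hpoly_add_two 0, deriv_eval_aux]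
      simp [Hpoly]
      ring
    | (n+2) =>
      rw [show n + 2 + 1 = (n + 1) + 2 from rfl, Hpoly_add_two (n+1), deriv_eval_aux]
      rw [ih (n+1) (by omega) x, ih n (by omega) x]
      rw [show n + 1 + 1 = n + 2 from rfl, Hpoly_add_two n]
      simp only [Polynomial.eval_sub, Polynomial.eval_mul, Polynomial.eval_C, Polynomial.eval_X,
        Polynomial.eval_ofNat]
      push_cast
      ring

lemma pow_le_fact_mul_exp (t : ℝ) (ht : 0 ≤ t) (n : ℕ) :
    t ^ n ≤ n.factorial * Real.exp t := by
  have h2 : t^n / n.factorial ≤ ∑ i ∈ range (n+1), t^i / i.factorial :=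
    Finset.single_le_sum (f := fun i => t^i / (i.factorial : ℝ))
      (fun i _ => by positivity) (mem_range.mpr (Nat.lt_succ_self n))
  have h := le_trans h2 (Real.sum_le_exp_of_nonneg ht (n+1))
  have hf : (0:ℝ) < n.factorial := by exact_mod_cast n.factorial_pos
  rw [div_le_iff₀ hf] at h
  linarith [h]

lemma integrable_pow_mul_expz (n : ℕ) (z : ℝ) :
    Integrable fun x : ℝ => x ^ n * Real.exp (x * z - x ^ 2) := by
  have hc : Continuous fun x : ℝ => x ^ n * Real.exp (x * z - x ^ 2) := by fun_prop
  have hbase := (integrable_exp_neg_mul_sq (b := (1:ℝ)/2) (by norm_num)).const_mul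
    ((n.factorial : ℝ) * Real.exp ((1 + |z|)^2 / 2))
  refine hbase.mono' hc.aestronglyMeasurable ?_
  filter_upwards with x
  have h1 : |x|^n ≤ n.factorial * Real.exp |x| := pow_le_fact_mul_exp |x| (abs_nonneg x) n
  have hxz : x * z ≤ |x| * |z| := le_trans (le_abs_self _) (by rw [abs_mul])
  have hkey : |x| + (x * z - x ^ 2) ≤ (1 + |z|)^2/2 + (-((1:ℝ)/2) * x^2) := by
    nlinarith [sq_nonneg (|x| - (1 + |z|)), sq_abs x]
  calc ‖x ^ n * Real.exp (x * z - x ^ 2)‖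
      = |x|^n * Real.exp (x * z - x ^ 2) := by
        rw [norm_mul, norm_pow, Real.norm_eq_abs, Real.norm_eq_abs, Real.abs_exp]
    _ ≤ (n.factorial * Real.exp |x|) * Real.exp (x * z - x ^ 2) := by
        apply mul_le_mul_of_nonneg_right h1 (Real.exp_nonneg _)
    _ = n.factorial * Real.exp (|x| + (x * z - x ^ 2)) := by rw [Real.exp_add]; ring
    _ ≤ n.factorial * Real.exp ((1 + |z|)^2/2 + (-((1:ℝ)/2) * x^2)) := by
        apply mul_le_mul_of_nonneg_left (Real.exp_le_exp.mpr hkey)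
          (by exact_mod_cast (n.factorial_pos).le)
    _ = (n.factorial * Real.exp ((1 + |z|)^2 / 2)) * Real.exp (-((1:ℝ)/2) * x^2) := by
        rw [Real.exp_add]; ring

lemma integrable_poly_mul_expz (P : Polynomial ℝ) (z : ℝ) :
    Integrable fun x : ℝ => P.eval x * Real.exp (x * z - x ^ 2) := by
  have : (fun x : ℝ => P.eval x * Real.exp (x * z - x ^ 2))
      = fun x : ℝ => ∑ i ∈ range (P.natDegree + 1),
          P.coeff i * (x ^ i * Real.exp (x * z - x ^ 2)) := by
    funext x
    rw [Polynomial.eval_eq_sum_range, Finset.sum_mul]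
    simp [mul_assoc]
  rw [this]
  exact integrable_finset_sum _ (fun i _ => (integrable_pow_mul_expz i z).const_mul _)

lemma ibp_zero (P : Polynomial ℝ) (z : ℝ) :
    ∫ x : ℝ, (Polynomial.derivative P + Polynomial.C z * P
        - Polynomial.C 2 * Polynomial.X * P).eval x * Real.exp (x * z - x ^ 2) = 0 := by
  apply integral_eq_zero_of_hasDerivAt_of_integrable
    (f := fun x => P.eval x * Real.exp (x * z - x ^ 2))
  · intro x
    have h1 : HasDerivAt (fun x : ℝ => x * z - x ^ 2) (z - 2 * x) x := by
      have := ((hasDerivAt_id x).mul_const z).fun_sub (hasDerivAt_pow 2 x)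
      simpa using this
    have h2 : HasDerivAt (fun x : ℝ => Real.exp (x * z - x ^ 2))
        (Real.exp (x * z - x ^ 2) * (z - 2 * x)) x := h1.exp
    have h3 : HasDerivAt (fun x : ℝ => P.eval x * Real.exp (x * z - x ^ 2))
        ((Polynomial.derivative P).eval x * Real.exp (x * z - x ^ 2)
          + P.eval x * (Real.exp (x * z - x ^ 2) * (z - 2 * x))) x :=
      (P.hasDerivAt x).fun_mul h2
    refine h3.congr_deriv ?_
    simp
    ring
  · exact integrable_poly_mul_expz _ z
  · exact integrable_poly_mul_expz _ z

lemma integrable_2x (P : Polynomial ℝ) (z : ℝ) :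
    Integrable fun x : ℝ => (2 * x * P.eval x) * Real.exp (x * z - x ^ 2) := by
  have h := integrable_poly_mul_expz (Polynomial.C 2 * Polynomial.X * P) z
  have e : (fun x : ℝ => (Polynomial.C 2 * Polynomial.X * P).eval x * Real.exp (x * z - x ^ 2))
      = fun x : ℝ => (2 * x * P.eval x) * Real.exp (x * z - x ^ 2) := by
    funext x; simp
  rwa [e] at h

lemma key_ibp (P : Polynomial ℝ) (z : ℝ) :
    ∫ x : ℝ, (2 * x * P.eval x) * Real.exp (x * z - x ^ 2)
      = z * (∫ x : ℝ, P.eval x * Real.exp (x * z - x ^ 2))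
        + ∫ x : ℝ, (Polynomial.derivative P).eval x * Real.exp (x * z - x ^ 2) := by
  have h0 := ibp_zero P z
  have hP := integrable_poly_mul_expz P z
  have hD := integrable_poly_mul_expz (Polynomial.derivative P) z
  have hX := integrable_2x P z
  have hsplit : (fun x : ℝ => (Polynomial.derivative P + Polynomial.C z * P
        - Polynomial.C 2 * Polynomial.X * P).eval x * Real.exp (x * z - x ^ 2))
      = fun x : ℝ => ((Polynomial.derivative P).eval x * Real.exp (x * z - x ^ 2)
          + z * (P.eval x * Real.exp (x * z - x ^ 2)))
          - (2 * x * P.eval x) * Real.exp (x * z - x ^ 2) := by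
    funext x; simp; ring
  have hAB : Integrable (fun x : ℝ => (Polynomial.derivative P).eval x * Real.exp (x * z - x ^ 2)
      + z * (P.eval x * Real.exp (x * z - x ^ 2))) := hD.add (hP.const_mul z)
  rw [hsplit, integral_sub hAB hX, integral_add hD (hP.const_mul z),
    MeasureTheory.integral_const_mul] at h0
  linarith

lemma integral_expz (z : ℝ) :
    ∫ x : ℝ, Real.exp (x * z - x ^ 2) = Real.sqrt π * Real.exp (z ^ 2 / 4) := by
  have h : (fun x : ℝ => Real.exp (x * z - x ^ 2))
      = fun x : ℝ => Real.exp (z ^ 2 / 4) * Real.exp (-(x - z / 2) ^ 2) := by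
    funext x; rw [← Real.exp_add]; congr 1; ring
  rw [h, MeasureTheory.integral_const_mul]
  have h2 : ∫ x : ℝ, Real.exp (-(x - z / 2) ^ 2) = ∫ x : ℝ, Real.exp (-x ^ 2) :=
    integral_sub_right_eq_self (fun x => Real.exp (-x ^ 2)) (z / 2)
  have h3 : ∫ x : ℝ, Real.exp (-x ^ 2) = Real.sqrt π := by
    have := integral_gaussian 1
    simpa using this
  rw [h2, h3]; ring

lemma J_Hpoly (n : ℕ) (z : ℝ) :
    ∫ x : ℝ, (Hpoly n).eval x * Real.exp (x * z - x ^ 2)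
      = Real.sqrt π * Real.exp (z ^ 2 / 4) * z ^ n := by
  induction n using Nat.strong_induction_on with
  | _ n ih =>
    match n with
    | 0 => simpa [Hpoly] using integral_expz z
    | 1 =>
      have e : (fun x : ℝ => (Hpoly 1).eval x * Real.exp (x * z - x ^ 2))
          = fun x : ℝ => (2 * x * (Hpoly 0).eval x) * Real.exp (x * z - x ^ 2) := by
        funext x; simp [Hpoly]
      rw [e, key_ibp (Hpoly 0) z]
      have : (Polynomial.derivative (Hpoly 0)) = 0 := by simp [Hpoly]
      rw [this]
      simp [ih 0 (by omega)]
      ring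
    | (n+2) =>
      rw [Hpoly_add_two n]
      have e : (fun x : ℝ => (2 * Polynomial.X * Hpoly (n+1)
            - Polynomial.C (2 * ((n:ℝ) + 1)) * Hpoly n).eval x * Real.exp (x * z - x ^ 2))
          = fun x : ℝ => (2 * x * (Hpoly (n+1)).eval x) * Real.exp (x * z - x ^ 2)
              - (2 * ((n:ℝ) + 1)) * ((Hpoly n).eval x * Real.exp (x * z - x ^ 2)) := by
        funext x; simp; ring
      rw [e, integral_sub (integrable_2x _ z) (((integrable_poly_mul_expz (Hpoly n) z)).const_mul
        (2 * ((n:ℝ) + 1))), MeasureTheory.integral_const_mul, key_ibp (Hpoly (n+1)) z]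
      have e2 : (fun x : ℝ => (Polynomial.derivative (Hpoly (n+1))).eval x
            * Real.exp (x * z - x ^ 2))
          = fun x : ℝ => (2 * ((n:ℝ) + 1)) * ((Hpoly n).eval x * Real.exp (x * z - x ^ 2)) := by
        funext x
        rw [Hpoly_deriv_eval n x]
        push_cast
        ring
      rw [e2, MeasureTheory.integral_const_mul, ih (n+1) (by omega), ih n (by omega)]
      ring

lemma sum_step (p q : ℕ) (hqp : q ≤ p) (z : ℝ) :
    z * (∑ j ∈ range (q+1), ((p+1).choose j : ℝ) * (q.choose j) * (j.factorial) * 2^j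
        * z^(p+1+q-2*j))
      + 2*((p:ℝ)+1) * (∑ j ∈ range (q+1), (p.choose j : ℝ) * (q.choose j) * (j.factorial) * 2^j
        * z^(p+q-2*j))
    = ∑ j ∈ range (q+1+1), ((p+1).choose j : ℝ) * ((q+1).choose j) * (j.factorial) * 2^j
        * z^(p+1+(q+1)-2*j) := by
  have hB : z * (∑ j ∈ range (q+1), ((p+1).choose j : ℝ) * (q.choose j) * (j.factorial) * 2^j
        * z^(p+1+q-2*j))
      = ∑ j ∈ range (q+1), ((p+1).choose j : ℝ) * (q.choose j) * (j.factorial) * 2^j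
        * z^(p+1+(q+1)-2*j) := by
    rw [Finset.mul_sum]
    refine Finset.sum_congr rfl fun j hj => ?_
    rw [mem_range] at hj
    rw [show p+1+(q+1)-2*j = (p+1+q-2*j)+1 by omega, pow_succ]
    ring
  have hD : 2*((p:ℝ)+1) * (∑ j ∈ range (q+1), (p.choose j : ℝ) * (q.choose j) * (j.factorial)
        * 2^j * z^(p+q-2*j))
      = ∑ j ∈ range (q+1), ((p+1).choose (j+1) : ℝ) * (q.choose j) * ((j+1).factorial) * 2^(j+1)
        * z^(p+1+(q+1)-2*(j+1)) := by
    rw [Finset.mul_sum]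
    refine Finset.sum_congr rfl fun j hj => ?_
    rw [mem_range] at hj
    have hc : (((p+1).choose (j+1) : ℝ)) * ((j:ℝ)+1) = ((p:ℝ)+1) * (p.choose j : ℝ) := by
      have h := Nat.add_one_mul_choose_eq p j
      have h2 : ((p+1) * p.choose j : ℕ) = ((p+1).choose (j+1) * (j+1) : ℕ) := h
      have := congrArg (Nat.cast (R := ℝ)) h2
      push_cast at this
      linarith
    rw [show p+1+(q+1)-2*(j+1) = p+q-2*j by omega, Nat.factorial_succ]
    push_cast
    linear_combination (-(2 * (q.choose j : ℝ) * (j.factorial : ℝ) * 2^j * z^(p+q-2*j))) * hc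
  have hsplit : ∀ j ∈ range (q+1),
      ((p+1).choose (j+1) : ℝ) * ((q+1).choose (j+1)) * ((j+1).factorial) * 2^(j+1)
        * z^(p+1+(q+1)-2*(j+1))
      = ((p+1).choose (j+1) : ℝ) * (q.choose j) * ((j+1).factorial) * 2^(j+1)
          * z^(p+1+(q+1)-2*(j+1))
        + ((p+1).choose (j+1) : ℝ) * (q.choose (j+1)) * ((j+1).factorial) * 2^(j+1)
          * z^(p+1+(q+1)-2*(j+1)) := by
    intro j hj
    rw [Nat.choose_succ_succ q j]
    push_cast
    ring
  have hRHS : ∑ j ∈ range (q+1+1), ((p+1).choose j : ℝ) * ((q+1).choose j) * (j.factorial) * 2^j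
        * z^(p+1+(q+1)-2*j)
      = (∑ j ∈ range (q+1), ((p+1).choose (j+1) : ℝ) * (q.choose j) * ((j+1).factorial) * 2^(j+1)
          * z^(p+1+(q+1)-2*(j+1)))
        + ((∑ j ∈ range (q+1), ((p+1).choose (j+1) : ℝ) * (q.choose (j+1)) * ((j+1).factorial)
            * 2^(j+1) * z^(p+1+(q+1)-2*(j+1)))
          + ((p+1).choose 0 : ℝ) * (q.choose 0) * ((0:ℕ).factorial) * 2^0 * z^(p+1+(q+1)-2*0)) := by
    rw [Finset.sum_range_succ' (fun j => ((p+1).choose j : ℝ) * ((q+1).choose j) * (j.factorial)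
      * 2^j * z^(p+1+(q+1)-2*j)) (q+1)]
    rw [Finset.sum_congr rfl hsplit, Finset.sum_add_distrib]
    simp
    ring
  have hB2 : ∑ j ∈ range (q+1), ((p+1).choose j : ℝ) * (q.choose j) * (j.factorial) * 2^j
        * z^(p+1+(q+1)-2*j)
      = (∑ j ∈ range (q+1), ((p+1).choose (j+1) : ℝ) * (q.choose (j+1)) * ((j+1).factorial)
          * 2^(j+1) * z^(p+1+(q+1)-2*(j+1)))
        + ((p+1).choose 0 : ℝ) * (q.choose 0) * ((0:ℕ).factorial) * 2^0 * z^(p+1+(q+1)-2*0) := by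
    have h1 : ∑ j ∈ range (q+1+1), ((p+1).choose j : ℝ) * (q.choose j) * (j.factorial) * 2^j
          * z^(p+1+(q+1)-2*j)
        = ∑ j ∈ range (q+1), ((p+1).choose j : ℝ) * (q.choose j) * (j.factorial) * 2^j
          * z^(p+1+(q+1)-2*j) := by
      rw [Finset.sum_range_succ]
      simp [Nat.choose_succ_self]
    rw [← h1, Finset.sum_range_succ' (fun j => ((p+1).choose j : ℝ) * (q.choose j) * (j.factorial)
      * 2^j * z^(p+1+(q+1)-2*j)) (q+1)]
  rw [hB, hD, hRHS, hB2]
  ring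

lemma deriv_prod_eval (p m : ℕ) (x : ℝ) :
    (Polynomial.derivative (Hpoly (p+1) * Hpoly m)).eval x
      = 2*((p:ℝ)+1) * ((Hpoly p * Hpoly m).eval x)
        + (Hpoly (p+1)).eval x * (Polynomial.derivative (Hpoly m)).eval x := by
  rw [Polynomial.derivative_mul]
  simp only [Polynomial.eval_add, Polynomial.eval_mul]
  rw [Hpoly_deriv_eval p x]
  push_cast
  ring

lemma I2_rec (p q : ℕ) (z : ℝ) :
    ∫ x : ℝ, (Hpoly (p+1) * Hpoly (q+1)).eval x * Real.exp (x * z - x ^ 2)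
      = z * (∫ x : ℝ, (Hpoly (p+1) * Hpoly q).eval x * Real.exp (x * z - x ^ 2))
        + 2*((p:ℝ)+1) * ∫ x : ℝ, (Hpoly p * Hpoly q).eval x * Real.exp (x * z - x ^ 2) := by
  match q with
  | 0 =>
    have e : (fun x : ℝ => (Hpoly (p+1) * Hpoly 1).eval x * Real.exp (x * z - x ^ 2))
        = fun x : ℝ => (2 * x * ((Hpoly (p+1) * Hpoly 0).eval x)) * Real.exp (x * z - x ^ 2) := by
      funext x; simp [Hpoly]; ring
    rw [e, key_ibp]
    have e2 : (fun x : ℝ => (Polynomial.derivative (Hpoly (p+1) * Hpoly 0)).eval x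
          * Real.exp (x * z - x ^ 2))
        = fun x : ℝ => (2*((p:ℝ)+1)) * ((Hpoly p * Hpoly 0).eval x * Real.exp (x * z - x ^ 2)) := by
      funext x
      rw [deriv_prod_eval]
      have : (Polynomial.derivative (Hpoly 0)) = 0 := by simp [Hpoly]
      rw [this]
      simp
      ring
    rw [e2, MeasureTheory.integral_const_mul]
  | (k+1) =>
    have e : (fun x : ℝ => (Hpoly (p+1) * Hpoly (k+1+1)).eval x * Real.exp (x * z - x ^ 2))
        = fun x : ℝ => (2 * x * ((Hpoly (p+1) * Hpoly (k+1)).eval x)) * Real.exp (x * z - x ^ 2)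
            - (2*((k:ℝ)+1)) * ((Hpoly (p+1) * Hpoly k).eval x * Real.exp (x * z - x ^ 2)) := by
      funext x
      rw [show k+1+1 = k+2 from rfl, Hpoly_add_two k]
      simp only [Polynomial.eval_mul, Polynomial.eval_sub, Polynomial.eval_C, Polynomial.eval_X,
        Polynomial.eval_ofNat]
      ring
    rw [e, integral_sub (integrable_2x _ z) (((integrable_poly_mul_expz (Hpoly (p+1) * Hpoly k) z)).const_mul
      (2*((k:ℝ)+1))), MeasureTheory.integral_const_mul, key_ibp]
    have e2 : (fun x : ℝ => (Polynomial.derivative (Hpoly (p+1) * Hpoly (k+1))).eval x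
          * Real.exp (x * z - x ^ 2))
        = fun x : ℝ => (2*((p:ℝ)+1)) * ((Hpoly p * Hpoly (k+1)).eval x * Real.exp (x * z - x ^ 2))
            + (2*((k:ℝ)+1)) * ((Hpoly (p+1) * Hpoly k).eval x * Real.exp (x * z - x ^ 2)) := by
      funext x
      rw [deriv_prod_eval, Hpoly_deriv_eval k x]
      simp only [Polynomial.eval_mul]
      push_cast
      ring
    rw [e2, integral_add (((integrable_poly_mul_expz (Hpoly p * Hpoly (k+1)) z)).const_mul _)
      (((integrable_poly_mul_expz (Hpoly (p+1) * Hpoly k) z)).const_mul _),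
      MeasureTheory.integral_const_mul, MeasureTheory.integral_const_mul]
    have hm : ∀ x : ℝ, (Hpoly p).eval x * (Hpoly (k+1)).eval x * Real.exp (x * z - x ^ 2)
        = (Hpoly p * Hpoly (k+1)).eval x * Real.exp (x * z - x ^ 2) := by
      intro x; rw [Polynomial.eval_mul]
    ring

lemma I2_closed (q : ℕ) : ∀ p : ℕ, q ≤ p → ∀ z : ℝ,
    ∫ x : ℝ, (Hpoly p * Hpoly q).eval x * Real.exp (x * z - x ^ 2)
      = Real.sqrt π * Real.exp (z ^ 2 / 4)
          * ∑ j ∈ range (q+1), (p.choose j : ℝ) * (q.choose j) * (j.factorial) * 2^j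
              * z^(p + q - 2*j) := by
  induction q with
  | zero =>
    intro p _ z
    have e : (fun x : ℝ => (Hpoly p * Hpoly 0).eval x * Real.exp (x * z - x ^ 2))
        = fun x : ℝ => (Hpoly p).eval x * Real.exp (x * z - x ^ 2) := by
      funext x; simp [Hpoly]
    rw [e, J_Hpoly p z]
    simp
  | succ k ihq =>
    intro p hp z
    obtain ⟨p', rfl⟩ : ∃ p', p = p' + 1 := ⟨p - 1, by omega⟩
    rw [I2_rec p' k z, ihq (p'+1) (by omega) z, ihq p' (by omega) z]
    have hstep := sum_step p' k (by omega) z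
    calc z * (Real.sqrt π * Real.exp (z ^ 2 / 4) * ∑ j ∈ range (k+1),
            ((p'+1).choose j : ℝ) * (k.choose j) * (j.factorial) * 2^j * z^(p'+1+k-2*j))
          + 2*((p':ℝ)+1) * (Real.sqrt π * Real.exp (z ^ 2 / 4) * ∑ j ∈ range (k+1),
            (p'.choose j : ℝ) * (k.choose j) * (j.factorial) * 2^j * z^(p'+k-2*j))
        = Real.sqrt π * Real.exp (z ^ 2 / 4)
            * (z * (∑ j ∈ range (k+1), ((p'+1).choose j : ℝ) * (k.choose j) * (j.factorial) * 2^j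
                * z^(p'+1+k-2*j))
              + 2*((p':ℝ)+1) * (∑ j ∈ range (k+1), (p'.choose j : ℝ) * (k.choose j) * (j.factorial)
                * 2^j * z^(p'+k-2*j))) := by ring
      _ = Real.sqrt π * Real.exp (z ^ 2 / 4) * ∑ j ∈ range (k+1+1),
            ((p'+1).choose j : ℝ) * ((k+1).choose j) * (j.factorial) * 2^j
              * z^(p'+1+(k+1)-2*j) := by rw [hstep]


lemma fact_mul_prod (a n : ℕ) :
    a.factorial * ∏ j ∈ Finset.Icc 1 n, (a + j) = (a + n).factorial := by
  induction n with
  | zero => simp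
  | succ n ih =>
    rw [Finset.prod_Icc_succ_top (by omega), ← mul_assoc, ih,
      show a + (n+1) = (a + n) + 1 from rfl, Nat.factorial_succ]
    ring

lemma prod_Icc_fact (k q p : ℕ) (hk : k ≤ q) (hpq : q ≤ p) :
    (p - q + k).factorial * ∏ j ∈ Finset.Icc (k+1) q, (p - q + j) = p.factorial := by
  have h1 : Finset.Icc (k+1) q = Finset.map (addLeftEmbedding k) (Finset.Icc 1 (q - k)) := by
    rw [Finset.map_add_left_Icc]
    congr 1
    omega
  rw [h1, Finset.prod_map]
  have h2 : ∀ i, p - q + (addLeftEmbedding k) i = (p - q + k) + i := by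
    intro i
    simp [addLeftEmbedding]
    omega
  rw [Finset.prod_congr rfl (fun i _ => h2 i), fact_mul_prod]
  congr 1
  omega

lemma term_eq (p q k : ℕ) (hk : k ≤ q) (hpq : q ≤ p) (z : ℝ) :
    (p.choose (q - k) : ℝ) * (q.choose (q - k)) * ((q - k).factorial) * 2^(q-k)
        * z^(p+q-2*(q-k))
      = 2^q * (q.factorial : ℝ) * z^(p-q) *
        ((-1:ℝ)^k * (∏ j ∈ Finset.Icc (k+1) q, ((p:ℝ) - (q:ℝ) + j)) / ((q-k).factorial)
          * (-z^2/2)^k / (k.factorial)) := by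
  have nz1 : ((q-k).factorial : ℝ) ≠ 0 := by exact_mod_cast (q-k).factorial_ne_zero
  have nz2 : ((k).factorial : ℝ) ≠ 0 := by exact_mod_cast (k).factorial_ne_zero
  have nz3 : ((p-q+k).factorial : ℝ) ≠ 0 := by exact_mod_cast (p-q+k).factorial_ne_zero
  have h1 : (∏ j ∈ Finset.Icc (k+1) q, ((p:ℝ) - (q:ℝ) + j))
      = (p.factorial : ℝ) / ((p-q+k).factorial) := by
    have e : ∀ j ∈ Finset.Icc (k+1) q, ((p:ℝ) - (q:ℝ) + (j:ℝ)) = ((p - q + j : ℕ) : ℝ) := by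
      intro j _
      rw [Nat.cast_add, Nat.cast_sub hpq]
    rw [Finset.prod_congr rfl e, ← Nat.cast_prod, eq_div_iff nz3, ← Nat.cast_mul, mul_comm]
    exact_mod_cast prod_Icc_fact k q p hk hpq
  have h2 : (p.choose (q-k) : ℝ) = (p.factorial : ℝ)
      / (((q-k).factorial : ℝ) * ((p-q+k).factorial : ℝ)) := by
    rw [Nat.cast_choose ℝ (le_trans (Nat.sub_le q k) hpq), show p - (q-k) = p-q+k by omega]
  have h3 : (q.choose (q-k) : ℝ) = (q.factorial : ℝ)
      / (((q-k).factorial : ℝ) * ((k).factorial : ℝ)) := by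
    rw [Nat.cast_choose ℝ (Nat.sub_le q k), show q - (q-k) = k by omega]
  have h4 : z^(p+q-2*(q-k)) = z^(p-q) * (z^2)^k := by
    rw [← pow_mul, ← pow_add, show (p-q) + 2*k = p+q-2*(q-k) by omega]
  have h5 : (2:ℝ)^q = 2^(q-k) * 2^k := by
    rw [← pow_add]
    congr 1
    omega
  have h6 : (-z^2/2 : ℝ)^k = (-1:ℝ)^k * (z^2)^k / 2^k := by
    rw [div_pow, neg_pow]
  rw [h1, h2, h3, h4, h5, h6]
  have nz4 : (2:ℝ)^k ≠ 0 := by positivity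
  have hm : ((-1:ℝ))^k * ((-1:ℝ))^k = 1 := by
    rw [← mul_pow]
    norm_num
  field_simp
  linear_combination (-((p.factorial : ℝ) * (q.factorial : ℝ) * ((q - k).factorial : ℝ)
    * 2 ^ (q - k) * (z ^ (p - q) * (z ^ 2) ^ k) * (((p - q + k).factorial : ℝ)
    * ((q - k).factorial : ℝ) * 2 ^ k * (k.factorial : ℝ))) - z ^ (p - q) * (z ^ 2) ^ k
    + (p.factorial : ℝ) * (q.factorial : ℝ) * ((q - k).factorial : ℝ)
    * 2 ^ (q - k) * (z ^ (p - q) * (z ^ 2) ^ k) * (((p - q + k).factorial : ℝ)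
    * ((q - k).factorial : ℝ) * 2 ^ k * (k.factorial : ℝ))) * hm

lemma final_alg (p q : ℕ) (hpq : q ≤ p) (z : ℝ) :
    Real.sqrt π * Real.exp (z^2/4) * ∑ j ∈ range (q+1),
        (p.choose j : ℝ) * (q.choose j) * (j.factorial) * 2^j * z^(p+q-2*j)
      = Real.sqrt Real.pi * 2 ^ q * (Nat.factorial q) * Real.exp (z ^ 2 / 4) * z ^ (p - q) *
        genLaguerre q (p - q) (-z ^ 2 / 2) := by
  rw [genLaguerre]
  rw [← Finset.sum_range_reflect
    (fun j => (p.choose j : ℝ) * (q.choose j) * (j.factorial) * 2^j * z^(p+q-2*j)) (q+1)]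
  rw [Finset.mul_sum, Finset.mul_sum]
  apply Finset.sum_congr rfl
  intro k hk
  rw [mem_range] at hk
  have ht := term_eq p q k (by omega) hpq z
  rw [show q + 1 - 1 = q from rfl]
  linear_combination (Real.sqrt π * Real.exp (z^2/4)) * ht


/-- `∫ e^{xz} H_p(x) H_q(x) e^{-x²} dx = √π 2^q q! e^{z²/4} z^{p-q} L_q^{(p-q)}(-z²/2)`
for `p ≥ q ≥ 0`. -/
theorem stmt_6 (p q : ℕ) (hpq : q ≤ p) (z : ℝ) :
    ∫ x : ℝ, Real.exp (x * z) * physHermite p x * physHermite q x * Real.exp (-x ^ 2) =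
      Real.sqrt Real.pi * 2 ^ q * (Nat.factorial q) * Real.exp (z ^ 2 / 4) * z ^ (p - q) *
        genLaguerre q (p - q) (-z ^ 2 / 2) := by
  have e : (fun x : ℝ => Real.exp (x * z) * physHermite p x * physHermite q x
        * Real.exp (-x ^ 2))
      = fun x : ℝ => (Hpoly p * Hpoly q).eval x * Real.exp (x * z - x ^ 2) := by
    funext x
    rw [physHermite_eq, physHermite_eq, Polynomial.eval_mul,
      show x * z - x ^ 2 = x * z + (-x ^ 2) by ring, Real.exp_add]
    ring
  rw [e, I2_closed q p hpq z]
  exact final_alg p q hpq z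
end
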